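/- For every real p > 0, the series Σ_{m=1}^∞ 2^{-1-m}·m!/p^{(m+1)} converges and its sum equals (d/dp) ln r(p) = (1/2)[ψ((p+1)/2) − ψ(p/2)] − 1/(2p). -/

import Mathlib

open MeasureTheory Finset Filter Topology

lemma Gamma_add_nat' (q : ℝ) (hq : 0 < q) (k : ℕ) :
    Real.Gamma (q + k) = (∏ j ∈ Finset.range k, (q + j)) * Real.Gamma q := by
  induction k with
  | zero => simp
  | succ k ih =>
    have h1 : q + (k + 1 : ℕ) = (q + k) + 1 := by push_cast; ring
    have h2 : q + (k : ℝ) ≠ 0 := by positivity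
    rw [h1, Real.Gamma_add_one h2, ih, Finset.prod_range_succ]
    ring

lemma beta_eval (q : ℝ) (hq : 0 < q) (m : ℕ) :
    ∫ t in Set.Ioc (0:ℝ) 1, t ^ (q - 1) * (1 - t) ^ m
      = (m.factorial : ℝ) / ∏ j ∈ Finset.range (m + 1), (q + j) := by
  have hprod : (0:ℝ) < ∏ j ∈ Finset.range (m + 1), (q + j) := by
    apply Finset.prod_pos; intro j _; positivity
  have hΓq : (0:ℝ) < Real.Gamma q := Real.Gamma_pos_of_pos hq
  -- complex beta
  have hbeta := Complex.Gamma_mul_Gamma_eq_betaIntegral (s := (q:ℂ)) (t := ((m:ℂ) + 1))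
    (by simpa using hq) (by simp; positivity)
  have hint : Complex.betaIntegral (q:ℂ) ((m:ℂ) + 1)
      = ((∫ t in (0:ℝ)..1, t ^ (q - 1) * (1 - t) ^ m : ℝ) : ℂ) := by
    rw [Complex.betaIntegral]
    rw [show ((m:ℂ) + 1 - 1) = ((m:ℕ):ℂ) by ring]
    rw [← intervalIntegral.integral_ofReal]
    apply intervalIntegral.integral_congr
    intro x hx
    rw [Set.uIcc_of_le (by norm_num : (0:ℝ) ≤ 1)] at hx
    have hx0 : (0:ℝ) ≤ x := hx.1
    simp only []
    rw [show ((q:ℂ)-1) = ((q-1:ℝ):ℂ) by push_cast; ring]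
    rw [Complex.cpow_natCast, ← Complex.ofReal_cpow hx0]
    push_cast
    ring
  rw [hint] at hbeta
  rw [show ((q:ℂ) + ((m:ℂ) + 1)) = ((q + ((m+1:ℕ):ℝ) : ℝ) : ℂ) by push_cast; ring] at hbeta
  rw [Complex.Gamma_ofReal, Complex.Gamma_ofReal] at hbeta
  rw [show ((m:ℂ) + 1) = (((m:ℝ) + 1 : ℝ) : ℂ) by push_cast; ring, Complex.Gamma_ofReal] at hbeta
  rw [Real.Gamma_nat_eq_factorial] at hbeta
  rw [← Complex.ofReal_mul, ← Complex.ofReal_mul, Complex.ofReal_inj] at hbeta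
  rw [Gamma_add_nat' q hq (m+1)] at hbeta
  have h2 : (m.factorial : ℝ) = (∏ j ∈ Finset.range (m + 1), (q + j)) *
      (∫ t in (0:ℝ)..1, t ^ (q - 1) * (1 - t) ^ m) := by
    apply mul_left_cancel₀ hΓq.ne'
    rw [hbeta]; ring
  rw [← intervalIntegral.integral_of_le (by norm_num : (0:ℝ) ≤ 1), h2, mul_comm,
    mul_div_assoc, div_self hprod.ne', mul_one]

lemma rpow_mul_cont_integrableOn {r : ℝ} (hr : -1 < r) {g : ℝ → ℝ}
    (hg : ContinuousOn g (Set.Icc 0 1)) :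
    MeasureTheory.IntegrableOn (fun t => t ^ r * g t) (Set.Ioc (0:ℝ) 1) := by
  rw [← intervalIntegrable_iff_integrableOn_Ioc_of_le (by norm_num : (0:ℝ) ≤ 1)]
  refine (intervalIntegral.intervalIntegrable_rpow' hr).mul_continuousOn ?_
  rwa [Set.uIcc_of_le (by norm_num : (0:ℝ) ≤ 1)]

lemma aux_summable {c : ℝ} (hc : 0 < c) :
    Summable (fun m : ℕ => ((c + 2 * m) * (c + 2 * m + 1))⁻¹) := by
  have h2 : Summable (fun m : ℕ => (1:ℝ) / (m + 1) ^ 2) := by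
    have := (summable_nat_add_iff (f := fun n : ℕ => (1:ℝ) / (n:ℝ) ^ 2) 1).mpr
      (Real.summable_one_div_nat_pow.mpr one_lt_two)
    refine this.congr fun n => by push_cast; ring
  refine Summable.of_nonneg_of_le (fun m => by positivity)
    (fun m => ?_) (h2.mul_left ((1 + 1/c) ^ 2))
  have hm1 : (0:ℝ) < c + 2 * m := by positivity
  have hm2 : (0:ℝ) < c + 2 * m + 1 := by positivity
  rw [inv_le_iff_one_le_mul₀ (by positivity)]
  have key : ((m:ℝ) + 1) ^ 2 ≤ (1 + 1/c) ^ 2 * ((c + 2 * m) * (c + 2 * m + 1)) := by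
    have e1 : (m:ℝ) + 1 ≤ (1 + 1/c) * (c + 2 * m) := by
      have : (1 + 1/c) * (c + 2 * m) = c + 2*m + 1 + 2*m/c := by field_simp; ring
      rw [this]
      have : (0:ℝ) ≤ 2*m/c := by positivity
      have : (m:ℝ) ≤ 2*m := by have := Nat.cast_nonneg (α := ℝ) m; linarith
      linarith [show (0:ℝ) ≤ 2*(m:ℝ)/c by positivity]
    have e2 : (m:ℝ) + 1 ≤ (1 + 1/c) * (c + 2 * m + 1) := by
      nlinarith [one_div_pos.mpr hc]
    calc ((m:ℝ) + 1) ^ 2 = ((m:ℝ)+1) * ((m:ℝ)+1) := sq ((m:ℝ)+1)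
      _ ≤ ((1 + 1/c) * (c + 2*m)) * ((1 + 1/c) * (c + 2*m+1)) := by
          apply mul_le_mul e1 e2 (by positivity) (by positivity)
      _ = (1 + 1/c) ^ 2 * ((c + 2 * m) * (c + 2 * m + 1)) := by ring
  calc (1:ℝ) = ((m:ℝ)+1)^2 * (1 / ((m:ℝ)+1)^2) := by field_simp
    _ ≤ ((1 + 1/c) ^ 2 * ((c + 2 * m) * (c + 2 * m + 1))) * (1 / ((m:ℝ)+1)^2) := by
        apply mul_le_mul_of_nonneg_right key (by positivity)
    _ = (1 + 1/c) ^ 2 * (1 / ((m:ℝ)+1) ^ 2) * ((c + 2 * m) * (c + 2 * m + 1)) := by ring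

lemma hasSum_A (p : ℝ) (hp : 0 < p) :
    HasSum
      (fun n : ℕ => (1 / 2 ^ (n + 2)) * ((n + 1).factorial : ℝ) /
        ∏ j ∈ Finset.range (n + 2), (p + j))
      ((∑' m : ℕ, ((p + 2 * m)⁻¹ - (p + 2 * m + 1)⁻¹)) - 1 / (2 * p)) := by
  have hr : (-1:ℝ) < p - 1 := by linarith
  set F : ℕ → ℝ → ℝ := fun n t => t ^ (p - 1) * ((1 / 2 ^ (n + 2)) * (1 - t) ^ (n + 1)) with hF
  set G : ℕ → ℝ → ℝ := fun m t => t ^ (p - 1 + 2 * m) - t ^ (p + 2 * m) with hG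
  have hFint : ∀ n, MeasureTheory.IntegrableOn (F n) (Set.Ioc (0:ℝ) 1) := by
    intro n
    exact rpow_mul_cont_integrableOn hr (by fun_prop)
  have hGint1 : ∀ r : ℝ, -1 < r → MeasureTheory.IntegrableOn
      (fun t : ℝ => t ^ r) (Set.Ioc (0:ℝ) 1) := by
    intro r hr'
    rw [← intervalIntegrable_iff_integrableOn_Ioc_of_le (by norm_num : (0:ℝ) ≤ 1)]
    exact intervalIntegral.intervalIntegrable_rpow' hr'
  have hGint : ∀ m, MeasureTheory.IntegrableOn (G m) (Set.Ioc (0:ℝ) 1) := by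
    intro m
    exact (hGint1 _ (by push_cast; linarith)).sub (hGint1 _ (by push_cast; linarith))
  -- integral of F n
  have hFval : ∀ n, ∫ t in Set.Ioc (0:ℝ) 1, F n t
      = (1 / 2 ^ (n + 2)) * ((n + 1).factorial : ℝ) / ∏ j ∈ Finset.range (n + 2), (p + j) := by
    intro n
    have : ∀ t : ℝ, F n t = (1 / 2 ^ (n + 2)) * (t ^ (p - 1) * (1 - t) ^ (n + 1)) := by
      intro t; simp only [hF]; ring
    rw [show (F n) = fun t => (1 / 2 ^ (n + 2) : ℝ) * (t ^ (p - 1) * (1 - t) ^ (n + 1)) from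
      funext this, MeasureTheory.integral_const_mul, beta_eval p hp (n + 1), mul_div_assoc]
  -- integral of G m
  have hGval : ∀ m : ℕ, ∫ t in Set.Ioc (0:ℝ) 1, G m t = (p + 2 * m)⁻¹ - (p + 2 * m + 1)⁻¹ := by
    intro m
    have h1 : (-1:ℝ) < p - 1 + 2 * m := by push_cast; linarith
    have h2 : (-1:ℝ) < p + 2 * m := by push_cast; linarith
    rw [← intervalIntegral.integral_of_le (by norm_num : (0:ℝ) ≤ 1)]
    rw [intervalIntegral.integral_sub (intervalIntegral.intervalIntegrable_rpow' h1)
      (intervalIntegral.intervalIntegrable_rpow' h2),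
      integral_rpow (Or.inl h1), integral_rpow (Or.inl h2)]
    rw [Real.one_rpow, Real.one_rpow, Real.zero_rpow (by linarith), Real.zero_rpow (by linarith)]
    push_cast
    rw [show p - 1 + 2 * (m:ℝ) + 1 = p + 2 * m by ring]
    field_simp
    norm_num
  -- nonnegativity on Ioc
  have hFnn : ∀ n, ∀ t ∈ Set.Ioc (0:ℝ) 1, 0 ≤ F n t := by
    intro n t ht
    have h1 : (0:ℝ) ≤ 1 - t := by linarith [ht.2]
    have h2 : (0:ℝ) ≤ t ^ (p-1) := Real.rpow_nonneg ht.1.le _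
    positivity
  have hGnn : ∀ m, ∀ t ∈ Set.Ioc (0:ℝ) 1, 0 ≤ G m t := by
    intro m t ht
    have := Real.rpow_le_rpow_of_exponent_ge ht.1 ht.2
      (by push_cast; linarith : p - 1 + 2 * (m:ℕ) ≤ p + 2 * (m:ℕ))
    simpa [hG, sub_nonneg] using this
  have hnorm : ∀ (H : ℕ → ℝ → ℝ), (∀ k, ∀ t ∈ Set.Ioc (0:ℝ) 1, 0 ≤ H k t) → ∀ k,
      ∫ t in Set.Ioc (0:ℝ) 1, ‖H k t‖ = ∫ t in Set.Ioc (0:ℝ) 1, H k t := by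
    intro H hH k
    refine MeasureTheory.setIntegral_congr_fun measurableSet_Ioc fun t ht => ?_
    exact Real.norm_of_nonneg (hH k t ht)
  -- summability of integrals of norms
  have hFsummable : Summable (fun n => ∫ t in Set.Ioc (0:ℝ) 1, ‖F n t‖) := by
    refine Summable.of_nonneg_of_le
      (fun n => MeasureTheory.integral_nonneg fun t => norm_nonneg _)
      (fun n => ?_) ((summable_geometric_of_lt_one (by norm_num) (by norm_num :
        (1:ℝ)/2 < 1)).mul_left (1/p))
    rw [hnorm F hFnn n, hFval n]
    have hprod : p * ((n+1).factorial : ℝ) ≤ ∏ j ∈ Finset.range (n + 2), (p + j) := by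
      rw [Finset.prod_range_succ', ← Finset.prod_range_add_one_eq_factorial]
      push_cast
      rw [add_zero, mul_comm]
      refine mul_le_mul ?_ le_rfl hp.le (Finset.prod_nonneg fun j _ => by positivity)
      refine Finset.prod_le_prod (fun j _ => by positivity) fun j _ => by linarith
    have hprodpos : (0:ℝ) < ∏ j ∈ Finset.range (n + 2), (p + j) := by
      refine Finset.prod_pos fun j _ => by positivity
    rw [div_le_iff₀ hprodpos]
    calc (1 / 2 ^ (n + 2)) * ((n + 1).factorial : ℝ)
        = (1/p * (1/2)^n) * (p * ((n+1).factorial : ℝ)) / 4 := by rw [div_pow, one_pow]; field_simp; ring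
      _ ≤ (1/p * (1/2)^n) * (∏ j ∈ Finset.range (n + 2), (p + j)) / 4 := by
          have h0 : (0:ℝ) ≤ 1/p * (1/2)^n := by positivity
          have := mul_le_mul_of_nonneg_left hprod h0
          linarith
      _ ≤ (1/p * (1/2)^n) * (∏ j ∈ Finset.range (n + 2), (p + j)) := by
          have h0 : (0:ℝ) ≤ (1/p * (1/2)^n) * (∏ j ∈ Finset.range (n + 2), (p + j)) := by
            positivity
          linarith
  have hGsummable : Summable (fun m => ∫ t in Set.Ioc (0:ℝ) 1, ‖G m t‖) := by
    refine ((aux_summable hp).congr (fun m => ?_)).congr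
      (fun m => (hnorm G hGnn m ▸ (hGval m).symm : _))
    have h1 : (0:ℝ) < p + 2*m := by positivity
    have h2 : (0:ℝ) < p + 2*m + 1 := by positivity
    field_simp
    ring
  -- HasSum of integrals
  have HA := MeasureTheory.hasSum_integral_of_summable_integral_norm
    (μ := MeasureTheory.volume.restrict (Set.Ioc (0:ℝ) 1)) (F := F)
    (fun n => hFint n) hFsummable
  have HB := MeasureTheory.hasSum_integral_of_summable_integral_norm
    (μ := MeasureTheory.volume.restrict (Set.Ioc (0:ℝ) 1)) (F := G)
    (fun m => hGint m) hGsummable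
  simp_rw [hFval] at HA
  simp_rw [hGval] at HB
  -- pointwise sums on Ioo
  have hFsum : ∀ t ∈ Set.Ioo (0:ℝ) 1, ∑' n, F n t
      = t ^ (p-1) * (1+t)⁻¹ - t ^ (p-1) * (1/2) := by
    intro t ht
    obtain ⟨ht0, ht1⟩ := ht
    have h0 : (0:ℝ) ≤ (1 - t)/2 := by linarith
    have h1 : (1 - t)/2 < 1 := by linarith
    have hgeo := (hasSum_geometric_of_lt_one h0 h1).mul_left (t^(p-1) * ((1-t)/2) / 2)
    have hterm : ∀ n : ℕ, F n t = (t^(p-1) * ((1-t)/2) / 2) * ((1-t)/2)^n := by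
      intro n
      simp only [hF, div_pow]
      field_simp
      ring
    have hval : (t^(p-1) * ((1-t)/2) / 2) * (1 - (1-t)/2)⁻¹
        = t ^ (p-1) * (1+t)⁻¹ - t ^ (p-1) * (1/2) := by
      rw [show (1 - (1-t)/2) = (1+t)/2 by ring]
      have h2 : (0:ℝ) < 1 + t := by linarith
      field_simp
      ring
    rw [← hval]
    exact ((hgeo.congr_fun hterm).tsum_eq : _)
  have hGsum : ∀ t ∈ Set.Ioo (0:ℝ) 1, ∑' m, G m t = t ^ (p-1) * (1+t)⁻¹ := by
    intro t ht
    obtain ⟨ht0, ht1⟩ := ht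
    have h0 : (0:ℝ) ≤ t^2 := sq_nonneg t
    have h1 : t^2 < 1 := by nlinarith
    have hgeo := (hasSum_geometric_of_lt_one h0 h1).mul_left (t^(p-1) - t^p)
    have hterm : ∀ m : ℕ, G m t = (t^(p-1) - t^p) * (t^2)^m := by
      intro m
      have e1 : t ^ (p - 1 + 2*(m:ℝ)) = t^(p-1) * (t^2)^m := by
        rw [Real.rpow_add ht0, show (2*(m:ℝ)) = ((2*m:ℕ):ℝ) by push_cast; ring,
          Real.rpow_natCast, pow_mul]
      have e2 : t ^ (p + 2*(m:ℝ)) = t^p * (t^2)^m := by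
        rw [Real.rpow_add ht0, show (2*(m:ℝ)) = ((2*m:ℕ):ℝ) by push_cast; ring,
          Real.rpow_natCast, pow_mul]
      simp only [hG, e1, e2]
      ring
    have hval : (t^(p-1) - t^p) * (1 - t^2)⁻¹ = t ^ (p-1) * (1+t)⁻¹ := by
      have e3 : t^p = t^(p-1) * t := by
        nth_rewrite 1 [show p = (p-1)+1 by ring]
        rw [Real.rpow_add ht0, Real.rpow_one]
      have h2 : (0:ℝ) < 1 + t := by linarith
      have h3 : (1:ℝ) - t^2 ≠ 0 := by nlinarith
      rw [e3]
      field_simp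
      ring
    rw [← hval]
    exact ((hgeo.congr_fun hterm).tsum_eq : _)
  -- the key integral identity
  have hH1 : MeasureTheory.IntegrableOn (fun t : ℝ => t ^ (p-1) * (1+t)⁻¹)
      (Set.Ioo (0:ℝ) 1) := by
    refine (rpow_mul_cont_integrableOn hr ?_).mono_set Set.Ioo_subset_Ioc_self
    refine ContinuousOn.inv₀ (by fun_prop) fun t ht => ?_
    have := ht.1; intro h; linarith
  have hH2 : MeasureTheory.IntegrableOn (fun t : ℝ => t ^ (p-1) * (1/2))
      (Set.Ioo (0:ℝ) 1) :=
    (rpow_mul_cont_integrableOn hr continuousOn_const).mono_set Set.Ioo_subset_Ioc_self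
  have hhalf : ∫ t in Set.Ioo (0:ℝ) 1, t ^ (p-1) * (1/2) = 1/(2*p) := by
    rw [← MeasureTheory.integral_Ioc_eq_integral_Ioo,
      ← intervalIntegral.integral_of_le (by norm_num : (0:ℝ) ≤ 1),
      intervalIntegral.integral_mul_const, integral_rpow (Or.inl hr)]
    rw [Real.one_rpow, Real.zero_rpow (by linarith), sub_add_cancel]
    field_simp
    ring
  have key : ∫ t in Set.Ioc (0:ℝ) 1, ∑' n, F n t
      = (∫ t in Set.Ioc (0:ℝ) 1, ∑' m, G m t) - 1/(2*p) := by
    rw [MeasureTheory.integral_Ioc_eq_integral_Ioo, MeasureTheory.integral_Ioc_eq_integral_Ioo]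
    have e4 : Set.EqOn (fun t : ℝ => ∑' n, F n t)
        (fun t : ℝ => t ^ (p-1) * (1+t)⁻¹ - t ^ (p-1) * (1/2)) (Set.Ioo 0 1) :=
      fun t ht => hFsum t ht
    have e5 : Set.EqOn (fun t : ℝ => ∑' m, G m t)
        (fun t : ℝ => t ^ (p-1) * (1+t)⁻¹) (Set.Ioo 0 1) :=
      fun t ht => hGsum t ht
    rw [MeasureTheory.setIntegral_congr_fun measurableSet_Ioo e4,
      MeasureTheory.setIntegral_congr_fun measurableSet_Ioo e5]
    rw [MeasureTheory.integral_sub hH1 hH2, hhalf]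
  rw [HB.tsum_eq, ← key]
  exact HA




noncomputable def r (p : ℝ) : ℝ :=
  Real.Gamma ((p + 1) / 2) / (Real.sqrt (p / 2) * Real.Gamma (p / 2))

lemma deriv_log_r (p : ℝ) (hp : 0 < p) :
    deriv (fun q => Real.log (r q)) p
      = (∑' m : ℕ, ((p + 2 * m)⁻¹ - (p + 2 * m + 1)⁻¹)) - 1 / (2 * p) := by
  set s : Set ℝ := Set.Ioo (p/2) (p+1) with hs_def
  have hs : IsOpen s := isOpen_Ioo
  have hps : p ∈ s := ⟨by linarith, by linarith⟩
  have hq0 : ∀ q ∈ s, 0 < q := fun q hq => lt_trans (by linarith) hq.1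
  set φ : ℕ → ℝ → ℝ := fun m q => (q + 2*m)⁻¹ - (q + 2*m + 1)⁻¹ with hφ
  set f : ℕ → ℝ → ℝ := fun n q => Real.BohrMollerup.logGammaSeq ((q+1)/2) n
      - Real.BohrMollerup.logGammaSeq (q/2) n - (1/2) * Real.log (q/2) with hf
  set f' : ℕ → ℝ → ℝ := fun n q => (∑ m ∈ Finset.range (n+1), φ m q) - 1/(2*q) with hf'
  set g' : ℝ → ℝ := fun q => (∑' m : ℕ, φ m q) - 1/(2*q) with hg'
  have hfeq : ∀ n : ℕ, f n = fun q => (1/2) * Real.log n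
      + (∑ m ∈ Finset.range (n+1), (Real.log (q/2 + m) - Real.log ((q+1)/2 + m)))
      - (1/2) * Real.log (q/2) := by
    intro n; funext q
    simp only [hf, Real.BohrMollerup.logGammaSeq, Finset.sum_sub_distrib]
    ring
  -- C1 : derivatives of the f n
  have C1 : ∀ n : ℕ, ∀ q ∈ s, HasDerivAt (f n) (f' n q) q := by
    intro n q hq
    have hq' : 0 < q := hq0 q hq
    rw [hfeq n]
    have hsum : HasDerivAt (fun q : ℝ =>
        ∑ m ∈ Finset.range (n+1), (Real.log (q/2 + m) - Real.log ((q+1)/2 + m)))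
        (∑ m ∈ Finset.range (n+1), φ m q) q := by
      refine HasDerivAt.fun_sum fun m _ => ?_
      have hm1 : (0:ℝ) < q/2 + m := by positivity
      have hm2 : (0:ℝ) < (q+1)/2 + m := by positivity
      have d1 : HasDerivAt (fun q : ℝ => q/2 + m) (1/2) q := by
        simpa using ((hasDerivAt_id q).div_const 2).add_const (m:ℝ)
      have d2 : HasDerivAt (fun q : ℝ => (q+1)/2 + m) (1/2) q := by
        simpa using (((hasDerivAt_id q).add_const 1).div_const 2).add_const (m:ℝ)
      have l1 := d1.log hm1.ne'
      have l2 := d2.log hm2.ne'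
      refine (l1.sub l2).congr_deriv ?_
      rw [hφ]
      have e1 : q + 2*(m:ℝ) ≠ 0 := by positivity
      have e2 : q + 2*(m:ℝ) + 1 ≠ 0 := by positivity
      field_simp
      ring
    have hlast : HasDerivAt (fun q : ℝ => (1/2) * Real.log (q/2)) (1/(2*q)) q := by
      have d3 : HasDerivAt (fun q : ℝ => q/2) (1/2) q := (hasDerivAt_id q).div_const 2
      have l3 := d3.log (by positivity : q/2 ≠ 0)
      have := l3.const_mul (1/2 : ℝ)
      refine this.congr_deriv ?_
      ring
    have := (hsum.const_add ((1/2) * Real.log n)).sub hlast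
    exact this
  -- C2 : uniform convergence of the derivatives
  have hbound : ∀ m : ℕ, ∀ q ∈ s, ‖φ m q‖ ≤ ((p/2 + 2*m) * (p/2 + 2*m + 1))⁻¹ := by
    intro m q hq
    have hq' : 0 < q := hq0 q hq
    have h1 : (0:ℝ) < q + 2*m := by positivity
    have h2 : (0:ℝ) < q + 2*m + 1 := by positivity
    have h3 : (0:ℝ) < p/2 + 2*m := by positivity
    have h4 : (0:ℝ) < p/2 + 2*m + 1 := by positivity
    have heq : φ m q = ((q + 2*m) * (q + 2*m + 1))⁻¹ := by
      rw [hφ]; field_simp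
      ring
    rw [heq, Real.norm_of_nonneg (by positivity)]
    apply inv_anti₀ (by positivity)
    have hq1 : p/2 ≤ q := hq.1.le
    nlinarith
  have hu : Summable (fun m : ℕ => ((p/2 + 2*m) * (p/2 + 2*m + 1))⁻¹) :=
    aux_summable (half_pos hp)
  have ht : TendstoUniformlyOn (fun N q => ∑ m ∈ Finset.range N, φ m q)
      (fun q => ∑' m, φ m q) atTop s := tendstoUniformlyOn_tsum_nat hu hbound
  have htshift : TendstoUniformlyOn (fun n q => ∑ m ∈ Finset.range (n+1), φ m q)
      (fun q => ∑' m, φ m q) atTop s :=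
    fun u hu' => (tendsto_add_atTop_nat 1).eventually (ht u hu')
  have hconst : TendstoUniformlyOn (fun (_ : ℕ) q => 1/(2*q)) (fun q => 1/(2*q)) atTop s :=
    fun u hu' => Filter.Eventually.of_forall (fun n x _ => refl_mem_uniformity hu')
  have C2 : TendstoUniformlyOn f' g' atTop s := by
    have := htshift.sub hconst
    exact this
  -- C3 : pointwise convergence to log (r q)
  have C3 : ∀ q ∈ s, Tendsto (fun n => f n q) atTop (𝓝 (Real.log (r q))) := by
    intro q hq
    have hq' : 0 < q := hq0 q hq
    have hq1 : (0:ℝ) < (q+1)/2 := by linarith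
    have hq2 : (0:ℝ) < q/2 := by linarith
    have t1 := Real.BohrMollerup.tendsto_log_gamma hq1
    have t2 := Real.BohrMollerup.tendsto_log_gamma hq2
    have t3 := (t1.sub t2).sub_const ((1/2) * Real.log (q/2))
    convert t3 using 2
    have hΓ1 : 0 < Real.Gamma ((q+1)/2) := Real.Gamma_pos_of_pos hq1
    have hΓ2 : 0 < Real.Gamma (q/2) := Real.Gamma_pos_of_pos hq2
    have hsq : 0 < Real.sqrt (q/2) := Real.sqrt_pos.mpr hq2
    unfold r
    rw [Real.log_div hΓ1.ne' (by positivity), Real.log_mul hsq.ne' hΓ2.ne',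
      Real.log_sqrt hq2.le]
    ring
  have HD : HasDerivAt (fun q => Real.log (r q)) (g' p) p :=
    hasDerivAt_of_tendstoUniformlyOn hs C2 (Filter.Eventually.of_forall C1) C3 hps
  rw [HD.deriv]

theorem hasSum_ell_series (p : ℝ) (hp : 0 < p) :
    HasSum
      (fun n : ℕ => (1 / 2 ^ (n + 2)) * ((n + 1).factorial : ℝ) /
        ∏ j ∈ Finset.range (n + 2), (p + j))
      (deriv (fun q => Real.log (r q)) p) := by
  rw [deriv_log_r p hp]
  exact hasSum_A p hp
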